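/- For any standard S4^C_I-algebra A there is a family of topologies (τ_i)_{i∈I} on the set Ult(A) of ultrafilters of A such that for every a ∈ A and i ∈ I, the Stone set {u : □_i a ∈ u} equals Int_{τ_i}({u : a ∈ u}), and moreover {u : C a ∈ u} = Int_τ({u : a ∈ u}) for τ = ⋂_{i∈I} τ_i. -/

import Mathlib

/-- An `S4CStruct` packages the box operators and the common-knowledge operator. -/
structure S4CStruct (I : Type*) (A : Type*) [Fintype I] [BooleanAlgebra A] where
  box : I → A → A
  C : A → A

namespace S4CStruct

variable {I A : Type*} [Fintype I] [BooleanAlgebra A]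

/-- `E a = ⋀ i, □_i a`. -/
def E (S : S4CStruct I A) (a : A) : A := Finset.univ.inf fun i => S.box i a

/-- The axioms of an `S4^C_I`-algebra. -/
structure IsS4C (S : S4CStruct I A) : Prop where
  box_top : ∀ i, S.box i ⊤ = ⊤
  box_inf : ∀ i a b, S.box i (a ⊓ b) = S.box i a ⊓ S.box i b
  box_idem : ∀ i a, S.box i (S.box i a) = S.box i a
  box_le : ∀ i a, S.box i a ≤ a
  C_top : S.C ⊤ = ⊤
  C_inf : ∀ a b, S.C (a ⊓ b) = S.C a ⊓ S.C b
  C_idem : ∀ a, S.C (S.C a) = S.C a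
  C_le : ∀ a, S.C a ≤ a
  fix : ∀ a, S.C a ≤ S.E a ⊓ S.E (S.C a)
  ind : ∀ a, S.E a ⊓ S.C (a ⇨ S.E a) ≤ S.C a

/-- A standard `S4^C_I`-algebra. -/
def Standard (S : S4CStruct I A) : Prop :=
  ∀ (d : A) (a : ℕ → A), (∀ j, a j ≤ S.E d ⊓ S.E (a (j + 1))) → a 0 ≤ S.C d

/-- The relation `a ≺_d b  ↔  b ≤ E d ⊓ E a`. -/
def prec (S : S4CStruct I A) (d : A) (a b : A) : Prop := b ≤ S.E d ⊓ S.E a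

end S4CStruct

/-- The intersection of a family of topologies (as families of open sets). -/
def interTop {X I : Type*} (τ : I → TopologicalSpace X) : TopologicalSpace X where
  IsOpen s := ∀ i, (τ i).IsOpen s
  isOpen_univ := fun i => @isOpen_univ _ (τ i)
  isOpen_inter := fun s t hs ht i => @IsOpen.inter _ (τ i) s t (hs i) (ht i)
  isOpen_sUnion := fun _ hF i => @isOpen_sUnion _ (τ i) _ (fun t htF => hF t htF i)

/-- Interior operator of an explicitly given topology. -/
def topInt {X : Type*} (t : TopologicalSpace X) (Y : Set X) : Set X := @interior X t Y

/-- An ultrafilter of a Boolean algebra. -/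
structure BoolUlt (A : Type*) [BooleanAlgebra A] where
  carrier : Set A
  top_mem : ⊤ ∈ carrier
  bot_not_mem : ⊥ ∉ carrier
  inf_mem : ∀ a b, a ∈ carrier → b ∈ carrier → a ⊓ b ∈ carrier
  mem_of_le : ∀ a b, a ≤ b → a ∈ carrier → b ∈ carrier
  mem_or_compl_mem : ∀ a, a ∈ carrier ∨ aᶜ ∈ carrier

/-- The Stone set `â = {u : ultrafilter | a ∈ u}`. -/
def boolHat {A : Type*} [BooleanAlgebra A] (a : A) : Set (BoolUlt A) :=
  {u | a ∈ u.carrier}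

section UltraAux

variable {A : Type*} [BooleanAlgebra A]

/-- A (proper) filter in a Boolean algebra. -/
def IsBFilter (G : Set A) : Prop :=
  ⊤ ∈ G ∧ ⊥ ∉ G ∧ (∀ a b, a ∈ G → b ∈ G → a ⊓ b ∈ G) ∧ ∀ a b, a ≤ b → a ∈ G → b ∈ G

/-- Every proper filter extends to an ultrafilter (Zorn). -/
lemma exists_boolUlt_of_filter {G : Set A} (hG : IsBFilter G) :
    ∃ u : BoolUlt A, G ⊆ u.carrier := by
  obtain ⟨m, hGm, hmF, hmax⟩ :
      ∃ m, G ⊆ m ∧ Maximal (fun G' => IsBFilter G') m := by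
    obtain ⟨m, h1, h2⟩ := zorn_subset_nonempty {G' : Set A | IsBFilter G'}
      (fun c hc hchain hne => by
        obtain ⟨G₀, hG₀⟩ := hne
        refine ⟨⋃₀ c, ⟨⟨G₀, hG₀, (hc hG₀).1⟩, ?_, ?_, ?_⟩, fun s hs => Set.subset_sUnion_of_mem hs⟩
        · rintro ⟨G', hG', hbot⟩
          exact (hc hG').2.1 hbot
        · rintro a b ⟨Ga, hGa, ha⟩ ⟨Gb, hGb, hb⟩
          rcases hchain.total hGa hGb with h | h
          · exact ⟨Gb, hGb, (hc hGb).2.2.1 a b (h ha) hb⟩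
          · exact ⟨Ga, hGa, (hc hGa).2.2.1 a b ha (h hb)⟩
        · rintro a b hab ⟨Ga, hGa, ha⟩
          exact ⟨Ga, hGa, (hc hGa).2.2.2 a b hab ha⟩) G hG
    exact ⟨m, h1, h2⟩
  -- maximal proper filter is an ultrafilter
  have hcompl : ∀ a : A, a ∈ m ∨ aᶜ ∈ m := by
    intro a
    by_cases ha : a ∈ m
    · exact Or.inl ha
    right
    -- the filter generated by m and a
    set m' : Set A := {y | ∃ g ∈ m, g ⊓ a ≤ y} with hm'
    by_cases hbot : (⊥ : A) ∈ m'
    · obtain ⟨g, hg, hgle⟩ := hbot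
      have : g ≤ aᶜ := by
        have := le_bot_iff.mp hgle
        exact le_compl_iff_disjoint_right.mpr (disjoint_iff.mpr this)
      exact hmF.2.2.2 g aᶜ this hg
    · exfalso
      have hm'F : IsBFilter m' := by
        refine ⟨⟨⊤, hmF.1, le_top⟩, hbot, ?_, ?_⟩
        · rintro x y ⟨gx, hgx, hx⟩ ⟨gy, hgy, hy⟩
          refine ⟨gx ⊓ gy, hmF.2.2.1 _ _ hgx hgy, ?_⟩
          calc gx ⊓ gy ⊓ a ≤ (gx ⊓ a) ⊓ (gy ⊓ a) := by
                refine le_inf (inf_le_inf_right a inf_le_left) (inf_le_inf_right a inf_le_right)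
            _ ≤ x ⊓ y := inf_le_inf hx hy
        · rintro x y hxy ⟨gx, hgx, hx⟩
          exact ⟨gx, hgx, hx.trans hxy⟩
      have hmm' : m ⊆ m' := fun g hg => ⟨g, hg, inf_le_left⟩
      have : m' ⊆ m := hmax hm'F hmm'
      exact ha (this ⟨⊤, hmF.1, by simp⟩)
  exact ⟨⟨m, hmF.1, hmF.2.1, hmF.2.2.1, hmF.2.2.2, hcompl⟩, hGm⟩

/-- The finite intersection property. -/
def hasFIP (T : Set A) : Prop := ∀ t : Finset A, ↑t ⊆ T → t.inf id ≠ ⊥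

/-- A set with the FIP extends to an ultrafilter. -/
lemma exists_boolUlt_of_FIP {T : Set A} (hT : hasFIP T) :
    ∃ u : BoolUlt A, T ⊆ u.carrier := by
  classical
  set G : Set A := {y | ∃ t : Finset A, ↑t ⊆ T ∧ t.inf id ≤ y} with hGdef
  have hG : IsBFilter G := by
    refine ⟨⟨∅, by simp⟩, ?_, ?_, ?_⟩
    · rintro ⟨t, ht, hle⟩
      exact hT t ht (le_bot_iff.mp hle)
    · rintro a b ⟨ta, hta, ha⟩ ⟨tb, htb, hb⟩
      refine ⟨ta ∪ tb, ?_, ?_⟩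
      · intro x hx
        rcases Finset.mem_union.mp hx with h | h
        · exact hta h
        · exact htb h
      · rw [Finset.inf_union]
        exact inf_le_inf ha hb
    · rintro a b hab ⟨t, ht, hle⟩
      exact ⟨t, ht, hle.trans hab⟩
  obtain ⟨u, hu⟩ := exists_boolUlt_of_filter hG
  exact ⟨u, fun x hx => hu ⟨{x}, by simpa using hx, by simp⟩⟩

lemma boolHat_mono {a b : A} (h : a ≤ b) : boolHat a ⊆ boolHat b :=
  fun u hu => u.mem_of_le a b h hu

lemma le_of_boolHat_subset {a b : A} (h : boolHat a ⊆ boolHat b) : a ≤ b := by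
  by_contra hab
  have hne : a ⊓ bᶜ ≠ ⊥ := by
    intro h0
    exact hab (sdiff_eq_bot_iff.mp (by rwa [sdiff_eq]))
  have hfip : hasFIP ({a ⊓ bᶜ} : Set A) := by
    intro t ht
    have ht' : t ⊆ ({a ⊓ bᶜ} : Finset A) := fun x hx => by simpa using ht hx
    rcases Finset.subset_singleton_iff.mp ht' with rfl | rfl
    · simp only [Finset.inf_empty]
      intro htop
      exact hne (le_bot_iff.mp (htop ▸ le_top))
    · simpa using hne
  obtain ⟨u, hu⟩ := exists_boolUlt_of_FIP hfip
  have hmem : a ⊓ bᶜ ∈ u.carrier := hu rfl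
  have ha : a ∈ u.carrier := u.mem_of_le _ _ inf_le_left hmem
  have hbc : bᶜ ∈ u.carrier := u.mem_of_le _ _ inf_le_right hmem
  have hb : b ∈ u.carrier := h ha
  have : b ⊓ bᶜ ∈ u.carrier := u.inf_mem _ _ hb hbc
  rw [inf_compl_eq_bot] at this
  exact u.bot_not_mem this

lemma boolUlt_prime (u : BoolUlt A) {a b : A} (h : a ⊔ b ∈ u.carrier) :
    a ∈ u.carrier ∨ b ∈ u.carrier := by
  by_contra hc
  push_neg at hc
  have ha : aᶜ ∈ u.carrier := (u.mem_or_compl_mem a).resolve_left hc.1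
  have hb : bᶜ ∈ u.carrier := (u.mem_or_compl_mem b).resolve_left hc.2
  have : (a ⊔ b) ⊓ (aᶜ ⊓ bᶜ) ∈ u.carrier :=
    u.inf_mem _ _ h (u.inf_mem _ _ ha hb)
  rw [← compl_sup, inf_compl_eq_bot] at this
  exact u.bot_not_mem this

lemma boolUlt_mem_sup_iff {β : Type*} (u : BoolUlt A) (t : Finset β) (f : β → A) :
    t.sup f ∈ u.carrier ↔ ∃ c ∈ t, f c ∈ u.carrier := by
  classical
  induction t using Finset.induction_on with
  | empty => simp [u.bot_not_mem]
  | insert c t hni ih =>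
    rw [Finset.sup_insert]
    constructor
    · intro h
      rcases boolUlt_prime u h with h | h
      · exact ⟨c, Finset.mem_insert_self _ _, h⟩
      · obtain ⟨d, hd, hdu⟩ := ih.mp h
        exact ⟨d, Finset.mem_insert_of_mem hd, hdu⟩
    · rintro ⟨d, hd, hdu⟩
      rcases Finset.mem_insert.mp hd with rfl | hd
      · exact u.mem_of_le _ _ le_sup_left hdu
      · exact u.mem_of_le _ _ (le_sup_of_le_right (Finset.le_sup hd)) hdu

lemma finset_compl_inf (t : Finset A) : (t.inf id)ᶜ = t.sup compl := by
  classical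
  induction t using Finset.induction_on with
  | empty => simp
  | insert c t hni ih => simp [Finset.inf_insert, Finset.sup_insert, compl_inf, ih]

/-- Compactness of the Stone space, algebraically. -/
lemma boolHat_cover {b : A} {Sc : Set A} (h : boolHat b ⊆ ⋃ c ∈ Sc, boolHat c) :
    ∃ t : Finset A, ↑t ⊆ Sc ∧ b ≤ t.sup id := by
  classical
  by_contra hc
  push_neg at hc
  have hfip : hasFIP (insert b (compl '' Sc)) := by
    intro t ht hbot
    set s := t.erase b with hs
    have hsub : (↑s : Set A) ⊆ compl '' Sc := by
      intro x hx
      have hxt : x ∈ t := Finset.mem_of_mem_erase hx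
      have hxb : x ≠ b := Finset.ne_of_mem_erase hx
      rcases ht hxt with h | h
      · exact absurd h hxb
      · exact h
    have hts : t ⊆ insert b s := by
      intro x hx
      by_cases hxb : x = b
      · simp [hxb]
      · exact Finset.mem_insert_of_mem (Finset.mem_erase.mpr ⟨hxb, hx⟩)
    have h1 : b ⊓ s.inf id = ⊥ := by
      have := Finset.inf_mono hts (f := id)
      rw [Finset.inf_insert, hbot] at this
      exact le_bot_iff.mp this
    have h2 : b ≤ (s.inf id)ᶜ :=
      le_compl_iff_disjoint_right.mpr (disjoint_iff.mpr h1)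
    rw [finset_compl_inf] at h2
    set t' := s.image compl with ht'
    have h3 : (↑t' : Set A) ⊆ Sc := by
      intro x hx
      obtain ⟨y, hy, rfl⟩ := Finset.mem_image.mp hx
      obtain ⟨c, hcS, hcy⟩ := hsub hy
      rwa [← hcy, compl_compl]
    have h4 : b ≤ t'.sup id := by
      rw [ht', Finset.sup_image]
      exact h2
    exact hc t' h3 h4
  obtain ⟨u, hu⟩ := exists_boolUlt_of_FIP hfip
  have hb : u ∈ boolHat b := hu (Set.mem_insert _ _)
  obtain ⟨c, hcS, hcu⟩ := Set.mem_iUnion₂.mp (h hb)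
  have hcc : cᶜ ∈ u.carrier := hu (Set.mem_insert_of_mem _ ⟨c, hcS, rfl⟩)
  have : c ⊓ cᶜ ∈ u.carrier := u.inf_mem _ _ hcu hcc
  rw [inf_compl_eq_bot] at this
  exact u.bot_not_mem this

end UltraAux

section S4Aux

variable {I A : Type*} [Fintype I] [BooleanAlgebra A]

lemma box_mono {S : S4CStruct I A} (hS : S.IsS4C) (i : I) {a b : A} (h : a ≤ b) :
    S.box i a ≤ S.box i b := by
  have h1 : a ⊓ b = a := inf_eq_left.mpr h
  have := hS.box_inf i a b
  rw [h1] at this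
  rw [this]
  exact inf_le_right

lemma E_le_box (S : S4CStruct I A) (i : I) (a : A) : S.E a ≤ S.box i a :=
  Finset.inf_le (Finset.mem_univ i)

lemma le_E {S : S4CStruct I A} {b a : A} (h : ∀ i, b ≤ S.box i a) : b ≤ S.E a :=
  Finset.le_inf fun i _ => h i

end S4Aux

theorem representation_of_standard {I A : Type*} [Fintype I] [Nonempty I] [BooleanAlgebra A]
    (S : S4CStruct I A) (hS : S.IsS4C) (hstd : S.Standard) :
    ∃ τ : I → TopologicalSpace (BoolUlt A),
      (∀ (a : A) (i : I), boolHat (S.box i a) = topInt (τ i) (boolHat a)) ∧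
      (∀ a : A, boolHat (S.C a) = topInt (interTop τ) (boolHat a)) := by
  classical
  set g : I → Set (Set (BoolUlt A)) := fun i => {V | ∃ b, V = boolHat (S.box i b)} with hg
  set τ : I → TopologicalSpace (BoolUlt A) := fun i => TopologicalSpace.generateFrom (g i) with hτ
  have hat_box_open : ∀ (i : I) (b : A), (τ i).IsOpen (boolHat (S.box i b)) :=
    fun i b => TopologicalSpace.GenerateOpen.basic _ ⟨b, rfl⟩
  -- characterization of open sets
  have open_iff : ∀ (i : I) (V : Set (BoolUlt A)), (τ i).IsOpen V →
      ∀ u ∈ V, ∃ b, S.box i b ∈ u.carrier ∧ boolHat (S.box i b) ⊆ V := by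
    intro i V hV
    change TopologicalSpace.GenerateOpen (g i) V at hV
    induction hV with
    | basic s hs =>
      obtain ⟨b, rfl⟩ := hs
      exact fun u hu => ⟨b, hu, subset_rfl⟩
    | univ =>
      intro u _
      refine ⟨⊤, ?_, fun _ _ => trivial⟩
      rw [hS.box_top i]; exact u.top_mem
    | inter s t _ _ ihs iht =>
      rintro u ⟨hus, hut⟩
      obtain ⟨b, hbu, hbs⟩ := ihs u hus
      obtain ⟨c, hcu, hct⟩ := iht u hut
      refine ⟨b ⊓ c, ?_, ?_⟩
      · rw [hS.box_inf i]; exact u.inf_mem _ _ hbu hcu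
      · intro v hv
        have hv' : S.box i b ⊓ S.box i c ∈ v.carrier := by rwa [← hS.box_inf i]
        exact ⟨hbs (v.mem_of_le _ _ inf_le_left hv'), hct (v.mem_of_le _ _ inf_le_right hv')⟩
    | sUnion F _ ihF =>
      rintro u ⟨t, htF, hut⟩
      obtain ⟨b, hbu, hbt⟩ := ihF t htF u hut
      exact ⟨b, hbu, hbt.trans (Set.subset_sUnion_of_mem htF)⟩
  -- open subsets of â are inside (box a)^
  have open_sub : ∀ (i : I) (U : Set (BoolUlt A)) (a : A), (τ i).IsOpen U →
      U ⊆ boolHat a → U ⊆ boolHat (S.box i a) := by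
    intro i U a hU hUa u hu
    obtain ⟨b, hbu, hbU⟩ := open_iff i U hU u hu
    have h1 : S.box i b ≤ a := le_of_boolHat_subset (hbU.trans hUa)
    have h2 : S.box i b ≤ S.box i a := by
      rw [← hS.box_idem i b]; exact box_mono hS i h1
    exact u.mem_of_le _ _ h2 hbu
  -- Part 1
  have part1 : ∀ (a : A) (i : I), boolHat (S.box i a) = topInt (τ i) (boolHat a) := by
    intro a i
    apply subset_antisymm
    · show boolHat (S.box i a) ⊆ @interior _ (τ i) (boolHat a)
      letI := τ i
      exact interior_maximal (boolHat_mono (hS.box_le i a)) (hat_box_open i a)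
    · show @interior _ (τ i) (boolHat a) ⊆ boolHat (S.box i a)
      letI := τ i
      exact open_sub i _ a isOpen_interior interior_subset
  refine ⟨τ, part1, ?_⟩
  intro a
  apply subset_antisymm
  · -- C a is open in every τ i and below a
    have hfixC : ∀ i, boolHat (S.C a) = boolHat (S.box i (S.C a)) := by
      intro i
      rw [le_antisymm (hS.box_le i (S.C a))
        ((hS.fix a).trans inf_le_right |>.trans (E_le_box S i (S.C a)))]
    have hopen : (interTop τ).IsOpen (boolHat (S.C a)) := by
      intro i
      rw [hfixC i]
      exact hat_box_open i (S.C a)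
    show boolHat (S.C a) ⊆ @interior _ (interTop τ) (boolHat a)
    letI := interTop τ
    exact interior_maximal (boolHat_mono (hS.C_le a)) hopen
  · intro u hu
    set U : Set (BoolUlt A) := topInt (interTop τ) (boolHat a) with hU
    have hUopen0 : (interTop τ).IsOpen U := by
      letI := interTop τ
      exact isOpen_interior
    have hUopen : ∀ i, (τ i).IsOpen U := hUopen0
    have hUa : U ⊆ boolHat a := by
      letI := interTop τ
      exact interior_subset
    -- good elements
    have hEa : ∀ b : A, boolHat b ⊆ U → b ≤ S.E a := by
      intro b hb
      refine le_E fun i => le_of_boolHat_subset (hb.trans (open_sub i U a (hUopen i) hUa))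
    -- successor step
    have step : ∀ b : A, boolHat b ⊆ U → ∃ b', boolHat b' ⊆ U ∧ b ≤ S.E b' := by
      intro b hb
      have he : ∀ i : I, ∃ e : A, boolHat e ⊆ U ∧ b ≤ e ∧ e ≤ S.box i e := by
        intro i
        set Sc : Set A := {c | (∃ d, c = S.box i d) ∧ boolHat c ⊆ U} with hSc
        have hcov : boolHat b ⊆ ⋃ c ∈ Sc, boolHat c := by
          intro v hv
          obtain ⟨d, hdv, hdU⟩ := open_iff i U (hUopen i) v (hb hv)
          exact Set.mem_iUnion₂.mpr ⟨S.box i d, ⟨⟨d, rfl⟩, hdU⟩, hdv⟩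
        obtain ⟨t, htSc, hble⟩ := boolHat_cover hcov
        refine ⟨t.sup id, ?_, hble, ?_⟩
        · intro v hv
          obtain ⟨c, hct, hcv⟩ := (boolUlt_mem_sup_iff v t id).mp hv
          exact (htSc hct).2 hcv
        · refine Finset.sup_le fun c hct => ?_
          obtain ⟨⟨d, rfl⟩, -⟩ := htSc hct
          have h1 : S.box i d ≤ t.sup id := Finset.le_sup (f := id) hct
          calc S.box i d = S.box i (S.box i d) := (hS.box_idem i d).symm
            _ ≤ S.box i (t.sup id) := box_mono hS i h1
      choose e he1 he2 he3 using he
      refine ⟨Finset.univ.sup e, ?_, ?_⟩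
      · intro v hv
        obtain ⟨i, -, hiv⟩ := (boolUlt_mem_sup_iff v Finset.univ e).mp hv
        exact he1 i hiv
      · refine le_E fun j => ?_
        calc b ≤ e j := he2 j
          _ ≤ S.box j (e j) := he3 j
          _ ≤ S.box j (Finset.univ.sup e) := box_mono hS j (Finset.le_sup (Finset.mem_univ j))
    -- base element
    obtain ⟨b₀, hb₀u, hb₀U⟩ := open_iff (Classical.arbitrary I) U (hUopen _) u hu
    -- build the chain
    have step' : ∀ p : {b : A // boolHat b ⊆ U}, ∃ q : {b : A // boolHat b ⊆ U}, p.1 ≤ S.E q.1 := by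
      rintro ⟨b, hb⟩
      obtain ⟨b', h1, h2⟩ := step b hb
      exact ⟨⟨b', h1⟩, h2⟩
    choose f hf using step'
    set p₀ : {b : A // boolHat b ⊆ U} := ⟨S.box (Classical.arbitrary I) b₀, hb₀U⟩ with hp₀
    set seq : ℕ → {b : A // boolHat b ⊆ U} := fun n => f^[n] p₀ with hseqdef
    set aa : ℕ → A := fun n => (seq n).1 with haa
    have hchain : ∀ j, aa j ≤ S.E a ⊓ S.E (aa (j + 1)) := by
      intro j
      refine le_inf (hEa _ (seq j).2) ?_
      have hsucc : seq (j + 1) = f (seq j) := Function.iterate_succ_apply' f j p₀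
      have := hf (seq j)
      rwa [← hsucc] at this
    have h0 : aa 0 ≤ S.C a := hstd a aa hchain
    have : aa 0 ∈ u.carrier := hb₀u
    exact u.mem_of_le _ _ h0 this
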